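/- Let A be a symmetric positive definite real matrix indexed by a finite type, and let D and D' be diagonal matrices with 0 ≤ D i i ≤ D' i i for every index i and D ≠ D'. Then trace((A + D')^{-1}) < trace((A + D)^{-1}). (This expresses that the effective resistance R_Q(S) = trace(L(S)_Q^{-1}) of the leader group Q is strictly monotonically decreasing in the set S of added edges incident to Q: if S ⊊ T ⊆ E_Q then R_Q(T) < R_Q(S).) -/

import Mathlib

open Matrix

section Aux
variable {n : Type*} [Fintype n] [DecidableEq n]

lemma comm_of_sq_eq_inv {P W : Matrix n n ℝ} (hdet : IsUnit P.det)
    (hWW : W * W = P⁻¹) : P * W = W * P := by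
  have h1 : W * P⁻¹ = P⁻¹ * W := by rw [← hWW, Matrix.mul_assoc]
  have h2 := congrArg (· * P) h1
  simp only [Matrix.mul_assoc, Matrix.nonsing_inv_mul _ hdet, Matrix.mul_one] at h2
  -- h2 : W = P⁻¹ * (W * P)
  calc P * W = P * (P⁻¹ * (W * P)) := by rw [← h2]
    _ = W * P := by rw [← Matrix.mul_assoc, Matrix.mul_nonsing_inv _ hdet, Matrix.one_mul]

/-- If `P` is positive definite and `P - 1` is PSD, then `1 - P⁻¹` is PSD. -/
lemma one_sub_inv_posSemidef' {P : Matrix n n ℝ} (hP : P.PosDef)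
    (h : (P - 1).PosSemidef) : ((1 : Matrix n n ℝ) - P⁻¹).PosSemidef := by
  obtain ⟨W, hHerm, hWW⟩ : ∃ W : Matrix n n ℝ, Wᴴ = W ∧ W * W = P⁻¹ :=
    by open scoped MatrixOrder in exact ⟨CFC.sqrt P⁻¹, (CFC.sqrt_nonneg P⁻¹).posSemidef.isHermitian,
      CFC.sqrt_mul_sqrt_self P⁻¹ hP.inv.posSemidef.nonneg⟩
  have hdet : IsUnit P.det := isUnit_iff_ne_zero.mpr hP.det_pos.ne'
  have hcomm : P * W = W * P := comm_of_sq_eq_inv hdet hWW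
  have hWPW : W * P * W = 1 := by
    rw [← hcomm, Matrix.mul_assoc, hWW, Matrix.mul_nonsing_inv _ hdet]
  have key : (1 : Matrix n n ℝ) - P⁻¹ = Wᴴ * (P - 1) * W := by
    rw [hHerm, Matrix.mul_sub, Matrix.sub_mul, Matrix.mul_one, hWW, hWPW]
  rw [key]
  exact h.conjTranspose_mul_mul_same W

lemma posDef_conj {C G : Matrix n n ℝ} (hC : C.PosDef) (hHerm : Gᴴ = G)
    (hGdet : IsUnit G.det) : (G * C * G).PosDef := by
  have hrw : G * C * G = Gᴴ * C * G := by rw [hHerm]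
  rw [hrw]
  refine .of_dotProduct_mulVec_pos ?_ fun x hx => ?_
  · exact isHermitian_conjTranspose_mul_mul G hC.isHermitian
  · have hGx : G *ᵥ x ≠ 0 := by
      intro h0
      apply hx
      have := congrArg (fun v => G⁻¹ *ᵥ v) h0
      simpa [Matrix.mulVec_mulVec, Matrix.nonsing_inv_mul _ hGdet] using this
    have := hC.dotProduct_mulVec_pos hGx
    simpa only [star_mulVec, dotProduct_mulVec, vecMul_vecMul] using this

/-- Inverse is antitone on positive definite matrices (Loewner order). -/
lemma inv_sub_inv_posSemidef' {B C : Matrix n n ℝ} (hB : B.PosDef) (hC : C.PosDef)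
    (h : (C - B).PosSemidef) : (B⁻¹ - C⁻¹).PosSemidef := by
  obtain ⟨G, hHerm, hGG⟩ : ∃ G : Matrix n n ℝ, Gᴴ = G ∧ G * G = B⁻¹ :=
    by open scoped MatrixOrder in exact ⟨CFC.sqrt B⁻¹, (CFC.sqrt_nonneg B⁻¹).posSemidef.isHermitian,
      CFC.sqrt_mul_sqrt_self B⁻¹ hB.inv.posSemidef.nonneg⟩
  have hdetB : IsUnit B.det := isUnit_iff_ne_zero.mpr hB.det_pos.ne'
  have hcomm : B * G = G * B := comm_of_sq_eq_inv hdetB hGG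
  have hGdet : IsUnit G.det := by
    have h1 : G.det * G.det = B⁻¹.det := by rw [← Matrix.det_mul, hGG]
    have hBinv : B⁻¹.det ≠ 0 := hB.inv.det_pos.ne'
    refine isUnit_iff_ne_zero.mpr fun h0 => hBinv ?_
    rw [← h1, h0, mul_zero]
  have hGBG : G * B * G = 1 := by
    rw [← hcomm, Matrix.mul_assoc, hGG, Matrix.mul_nonsing_inv _ hdetB]
  have hN : (G * C * G).PosDef := posDef_conj hC hHerm hGdet
  have hN1 : (G * C * G - 1).PosSemidef := by
    have heq : G * C * G - 1 = Gᴴ * (C - B) * G := by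
      rw [hHerm, Matrix.mul_sub, Matrix.sub_mul, hGBG]
    rw [heq]
    exact h.conjTranspose_mul_mul_same G
  have hNinv : (G * C * G)⁻¹ = G⁻¹ * C⁻¹ * G⁻¹ := by
    rw [Matrix.mul_inv_rev, Matrix.mul_inv_rev, Matrix.mul_assoc]
  have key : B⁻¹ - C⁻¹ = Gᴴ * (1 - (G * C * G)⁻¹) * G := by
    rw [hHerm, Matrix.mul_sub, Matrix.sub_mul, Matrix.mul_one, hGG, hNinv]
    congr 1
    rw [← Matrix.mul_assoc, ← Matrix.mul_assoc, Matrix.mul_nonsing_inv _ hGdet,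
      Matrix.one_mul, Matrix.mul_assoc, Matrix.nonsing_inv_mul _ hGdet, Matrix.mul_one]
  rw [key]
  exact (one_sub_inv_posSemidef' hN hN1).conjTranspose_mul_mul_same G

/-- A nonzero PSD matrix has positive trace. -/
lemma trace_pos_of_posSemidef_ne_zero {M : Matrix n n ℝ} (hM : M.PosSemidef)
    (h : M ≠ 0) : 0 < M.trace := by
  obtain ⟨B, rfl⟩ : ∃ B : Matrix n n ℝ, M = Bᴴ * B := by
    open scoped MatrixOrder in exact CStarAlgebra.nonneg_iff_eq_star_mul_self.mp hM.nonneg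
  have hB : B ≠ 0 := by rintro rfl; simp at h
  obtain ⟨i, j, hij⟩ : ∃ i j, B i j ≠ 0 := by
    by_contra hc
    push_neg at hc
    exact hB (by ext i j; simpa using hc i j)
  have htr : (Bᴴ * B).trace = ∑ j, ∑ i, (B i j) ^ 2 := by
    simp [Matrix.trace, Matrix.diag, Matrix.mul_apply, Matrix.conjTranspose_apply, sq]
  rw [htr]
  apply Finset.sum_pos'
  · intro k _
    exact Finset.sum_nonneg fun l _ => sq_nonneg _
  · refine ⟨j, Finset.mem_univ _, ?_⟩
    apply Finset.sum_pos'
    · intro l _; exact sq_nonneg _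
    · exact ⟨i, Finset.mem_univ _, by positivity⟩

end Aux

/-- For a symmetric positive definite matrix `A` and diagonal matrices `D ≤ D'`
(entrywise, with nonnegative entries) with `D ≠ D'`, we have
`trace((A + D')⁻¹) < trace((A + D)⁻¹)`: the effective resistance
`R_Q(S) = trace(L(S)_Q⁻¹)` is strictly decreasing in the set of added edges. -/
theorem trace_inv_strict_anti_diagonal {n : Type*} [Fintype n] [DecidableEq n]
    (A : Matrix n n ℝ) (hA : A.PosDef)
    (d d' : n → ℝ) (hd : ∀ i, 0 ≤ d i) (hdd' : ∀ i, d i ≤ d' i) (hne : d ≠ d') :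
    ((A + Matrix.diagonal d')⁻¹).trace < ((A + Matrix.diagonal d)⁻¹).trace := by
  have hd' : ∀ i, 0 ≤ d' i := fun i => (hd i).trans (hdd' i)
  have hB : (A + Matrix.diagonal d).PosDef :=
    hA.add_posSemidef (PosSemidef.diagonal fun i => hd i)
  have hC : (A + Matrix.diagonal d').PosDef :=
    hA.add_posSemidef (PosSemidef.diagonal fun i => hd' i)
  have hCB : (A + Matrix.diagonal d') - (A + Matrix.diagonal d)
      = Matrix.diagonal (d' - d) := by
    rw [add_sub_add_left_eq_sub, Matrix.diagonal_sub]
    rfl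
  have hPSD : ((A + Matrix.diagonal d') - (A + Matrix.diagonal d)).PosSemidef := by
    rw [hCB]
    exact PosSemidef.diagonal fun i => sub_nonneg.mpr (hdd' i)
  have hMne : (A + Matrix.diagonal d)⁻¹ - (A + Matrix.diagonal d')⁻¹ ≠ 0 := by
    intro h0
    have hinv := sub_eq_zero.mp h0
    have hBC : A + Matrix.diagonal d = A + Matrix.diagonal d' := by
      have := congrArg (·⁻¹) hinv
      simpa [Matrix.nonsing_inv_nonsing_inv _ (isUnit_iff_ne_zero.mpr hB.det_pos.ne'),
        Matrix.nonsing_inv_nonsing_inv _ (isUnit_iff_ne_zero.mpr hC.det_pos.ne')] using this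
    apply hne
    have hdiag : Matrix.diagonal d = Matrix.diagonal d' := add_left_cancel hBC
    funext i
    have := congrFun (congrFun hdiag i) i
    simpa using this
  have hpos : 0 < ((A + Matrix.diagonal d)⁻¹ - (A + Matrix.diagonal d')⁻¹).trace :=
    trace_pos_of_posSemidef_ne_zero (inv_sub_inv_posSemidef' hB hC hPSD) hMne
  rw [Matrix.trace_sub] at hpos
  linarith
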